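/- arXiv:2006.03518 — 3 statements merged into one kernel-verified Lean document; each statement's English description precedes it below -/
import Mathlib

section
/- Continuous fractional integration by parts with Caputo derivatives: Let α ∈ (0,1), T > 0 and let φ, κ : [0,T] → ℝ be continuously differentiable. Then ∫₀ᵀ (∂^α_{(0,t]}φ)(t)·κ(t) dt + φ(0)·(I^{1−α}_{[t,T)}κ)(0) = ∫₀ᵀ φ(t)·(∂^α_{[t,T)}κ)(t) dt + κ(T)·(I^{1−α}_{(0,t]}φ)(T), i.e. ∫₀ᵀ [(1/Γ(1−α))∫₀ᵗ φ′(s)(t−s)^{−α} ds]·κ(t) dt + φ(0)·(1/Γ(1−α))∫₀ᵀ κ(s)·s^{−α} ds = ∫₀ᵀ φ(t)·[−(1/Γ(1−α))∫ₜᵀ κ′(s)(s−t)^{−α} ds] dt + κ(T)·(1/Γ(1−α))∫₀ᵀ φ(s)(T−s)^{−α} ds. -/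
open Real MeasureTheory Set intervalIntegral

noncomputable section

namespace FracIBP

lemma ker_intble1 {α : ℝ} (hα : α < 1) (s a b : ℝ) :
    IntervalIntegrable (fun x => (x - s) ^ (-α)) volume a b := by
  have h := (intervalIntegrable_rpow' (a := a - s) (b := b - s)
    (show (-1:ℝ) < -α by linarith)).comp_sub_right s
  simpa using h

lemma ker_intble2 {α : ℝ} (hα : α < 1) (t a b : ℝ) :
    IntervalIntegrable (fun x => (t - x) ^ (-α)) volume a b := by
  have h := (intervalIntegrable_rpow' (a := t - a) (b := t - b)
    (show (-1:ℝ) < -α by linarith)).comp_sub_left t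
  simpa using h

lemma ker_eval1 {α : ℝ} (hα : α < 1) {s t : ℝ} (_hst : s ≤ t) :
    ∫ x in s..t, (x - s) ^ (-α) = (t - s) ^ (1 - α) / (1 - α) := by
  have h1 : -α + 1 ≠ 0 := by intro h; apply absurd hα; simp [show α = 1 by linarith]
  rw [intervalIntegral.integral_comp_sub_right (fun x => x ^ (-α)) s, sub_self,
    integral_rpow (Or.inl (by linarith)), Real.zero_rpow h1]
  rw [show -α + 1 = 1 - α by ring]
  ring

lemma ker_eval2 {α : ℝ} (hα : α < 1) {s t : ℝ} (_hst : s ≤ t) :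
    ∫ x in s..t, (t - x) ^ (-α) = (t - s) ^ (1 - α) / (1 - α) := by
  have h1 : -α + 1 ≠ 0 := by intro h; apply absurd hα; simp [show α = 1 by linarith]
  rw [intervalIntegral.integral_comp_sub_left (fun x => x ^ (-α)) t, sub_self,
    integral_rpow (Or.inl (by linarith)), Real.zero_rpow h1]
  rw [show -α + 1 = 1 - α by ring]
  ring

lemma ker_cont0 {α : ℝ} : ContinuousOn (fun x : ℝ => x ^ (-α)) (Ioi 0) := by
  intro x hx
  exact (Real.continuousAt_rpow_const _ _ (Or.inl (ne_of_gt hx))).continuousWithinAt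

lemma ker_cont1 {α : ℝ} (s : ℝ) : ContinuousOn (fun x : ℝ => (x - s) ^ (-α)) (Ioi s) := by
  intro x hx
  apply ContinuousAt.continuousWithinAt
  exact ContinuousAt.rpow_const ((continuous_id.sub continuous_const).continuousAt)
    (Or.inl (ne_of_gt (sub_pos.2 hx)))

lemma ker_cont2 {α : ℝ} (t : ℝ) : ContinuousOn (fun x : ℝ => (t - x) ^ (-α)) (Iio t) := by
  intro x hx
  apply ContinuousAt.continuousWithinAt
  exact ContinuousAt.rpow_const ((continuous_const.sub continuous_id).continuousAt)
    (Or.inl (ne_of_gt (sub_pos.2 hx)))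

lemma ftc {T : ℝ} {f f' : ℝ → ℝ}
    (hf : ∀ t ∈ Icc (0:ℝ) T, HasDerivWithinAt f (f' t) (Icc (0:ℝ) T) t)
    (hf' : ContinuousOn f' (Icc (0:ℝ) T)) {a b : ℝ} (h0 : 0 ≤ a) (hab : a ≤ b) (hbT : b ≤ T) :
    ∫ x in a..b, f' x = f b - f a := by
  have hsub : Icc a b ⊆ Icc (0:ℝ) T := Icc_subset_Icc h0 hbT
  apply intervalIntegral.integral_eq_sub_of_hasDeriv_right_of_le hab
  · have hc : ContinuousOn f (Icc (0:ℝ) T) := fun x hx => (hf x hx).continuousWithinAt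
    exact hc.mono hsub
  · intro x hx
    have hx' : x ∈ Ioo (0:ℝ) T := ⟨lt_of_le_of_lt h0 hx.1, lt_of_lt_of_le hx.2 hbT⟩
    exact ((hf x (Ioo_subset_Icc_self hx')).hasDerivAt
      (Icc_mem_nhds hx'.1 hx'.2)).hasDerivWithinAt
  · exact ((hf'.mono hsub).mono (uIcc_of_le hab).subset).intervalIntegrable

lemma fubW1 {a b : ℝ} (hab : a ≤ b) {w g : ℝ → ℝ} (hw : IntervalIntegrable w volume a b)
    (hwc : ContinuousOn w (Ioo a b)) (hg : ContinuousOn g (Icc a b)) :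
    ∫ t in a..b, w t * (∫ u in t..b, g u) = ∫ t in a..b, (∫ x in a..t, w x) * g t := by
  set W : ℝ → ℝ := fun t => ∫ x in a..t, w x with hW
  set G : ℝ → ℝ := fun t => ∫ u in t..b, g u with hG
  have huIcc : uIcc a b = Icc a b := uIcc_of_le hab
  have hgi : ∀ c d, c ∈ Icc a b → d ∈ Icc a b → IntervalIntegrable g volume c d := by
    intro c d hc hd
    apply ContinuousOn.intervalIntegrable
    apply hg.mono
    rw [← huIcc, uIcc_subset_uIcc_iff_mem, huIcc]
    exact ⟨hc, hd⟩
  have hWc : ContinuousOn W (Icc a b) := by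
    rw [← huIcc]; exact continuousOn_primitive_interval (by rwa [huIcc, ← intervalIntegrable_iff_integrableOn_Icc_of_le hab])
  have hGc : ContinuousOn G (Icc a b) := by
    rw [← huIcc]
    exact continuousOn_primitive_interval_left (by rw [huIcc, ← intervalIntegrable_iff_integrableOn_Icc_of_le hab]; exact hgi a b ⟨le_rfl, hab⟩ ⟨hab, le_rfl⟩)
  have key : ∀ x ∈ Ioo a b, HasDerivAt (fun t => W t * G t) (w x * G x - W x * g x) x := by
    intro x hx
    have hmemIcc : Icc a b ∈ nhds x := Icc_mem_nhds hx.1 hx.2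
    have hWd : HasDerivAt W (w x) x := by
      apply intervalIntegral.integral_hasDerivAt_right
      · exact hw.mono_set (by rw [huIcc, uIcc_of_le hx.1.le]; exact Icc_subset_Icc le_rfl hx.2.le)
      · exact hwc.stronglyMeasurableAtFilter isOpen_Ioo x hx
      · exact hwc.continuousAt (isOpen_Ioo.mem_nhds hx)
    have hGd : HasDerivAt G (-(g x)) x := by
      have heq : G =ᶠ[nhds x] (fun y => (∫ u in a..b, g u) - ∫ u in a..y, g u) := by
        filter_upwards [hmemIcc] with y hy
        have := intervalIntegral.integral_add_adjacent_intervals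
          (hgi a y ⟨le_rfl, hab⟩ hy) (hgi y b hy ⟨hab, le_rfl⟩)
        simp only [hG]; linarith
      have hpd : HasDerivAt (fun y => ∫ u in a..y, g u) (g x) x := by
        apply intervalIntegral.integral_hasDerivAt_right
        · exact hgi a x ⟨le_rfl, hab⟩ (Ioo_subset_Icc_self hx)
        · exact (hg.mono Ioo_subset_Icc_self).stronglyMeasurableAtFilter isOpen_Ioo x hx
        · exact (hg.mono Ioo_subset_Icc_self).continuousAt (isOpen_Ioo.mem_nhds hx)
      have hcd : HasDerivAt (fun y => (∫ u in a..b, g u) - ∫ u in a..y, g u) (-(g x)) x := by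
        exact ((hasDerivAt_const x (∫ u in a..b, g u)).sub hpd).congr_deriv (by simp)
      exact hcd.congr_of_eventuallyEq heq
    have := hWd.mul hGd
    rw [show w x * G x + W x * -g x = w x * G x - W x * g x by ring] at this
    exact this
  have main : ∫ x in a..b, (w x * G x - W x * g x) = W b * G b - W a * G a := by
    apply intervalIntegral.integral_eq_sub_of_hasDeriv_right_of_le hab
      (hWc.mul hGc) (fun x hx => (key x hx).hasDerivWithinAt)
    apply IntervalIntegrable.sub
    · exact hw.mul_continuousOn (by rwa [huIcc])
    · exact ((hWc.mul hg).mono (by rw [huIcc])).intervalIntegrable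
  have hWa : W a = 0 := integral_same
  have hGb : G b = 0 := integral_same
  rw [hWa, hGb] at main
  simp only [mul_zero, zero_mul, sub_zero] at main
  have hint1 : IntervalIntegrable (fun t => w t * G t) volume a b :=
    hw.mul_continuousOn (by rwa [huIcc])
  have hint2 : IntervalIntegrable (fun t => W t * g t) volume a b :=
    ((hWc.mul hg).mono (by rw [huIcc])).intervalIntegrable
  have := intervalIntegral.integral_sub hint1 hint2
  rw [main] at this
  linarith

lemma fubW2 {a b : ℝ} (hab : a ≤ b) {w g : ℝ → ℝ} (hw : IntervalIntegrable w volume a b)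
    (hwc : ContinuousOn w (Ioo a b)) (hg : ContinuousOn g (Icc a b)) :
    ∫ t in a..b, w t * (∫ u in a..t, g u) = ∫ t in a..b, (∫ x in t..b, w x) * g t := by
  set V : ℝ → ℝ := fun t => ∫ x in t..b, w x with hV
  set P : ℝ → ℝ := fun t => ∫ u in a..t, g u with hP
  have huIcc : uIcc a b = Icc a b := uIcc_of_le hab
  have hgi : ∀ c d, c ∈ Icc a b → d ∈ Icc a b → IntervalIntegrable g volume c d := by
    intro c d hc hd
    apply ContinuousOn.intervalIntegrable
    apply hg.mono
    rw [← huIcc, uIcc_subset_uIcc_iff_mem, huIcc]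
    exact ⟨hc, hd⟩
  have hwi : ∀ c d, c ∈ Icc a b → d ∈ Icc a b → IntervalIntegrable w volume c d := by
    intro c d hc hd
    apply hw.mono_set
    rw [uIcc_subset_uIcc_iff_mem, huIcc]
    exact ⟨hc, hd⟩
  have hVc : ContinuousOn V (Icc a b) := by
    rw [← huIcc]
    exact continuousOn_primitive_interval_left (by rw [huIcc, ← intervalIntegrable_iff_integrableOn_Icc_of_le hab]; exact hw)
  have hPc : ContinuousOn P (Icc a b) := by
    rw [← huIcc]
    exact continuousOn_primitive_interval (by rw [huIcc, ← intervalIntegrable_iff_integrableOn_Icc_of_le hab]; exact hgi a b ⟨le_rfl, hab⟩ ⟨hab, le_rfl⟩)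
  have key : ∀ x ∈ Ioo a b, HasDerivAt (fun t => V t * P t) (V x * g x - w x * P x) x := by
    intro x hx
    have hmemIcc : Icc a b ∈ nhds x := Icc_mem_nhds hx.1 hx.2
    have hPd : HasDerivAt P (g x) x := by
      apply intervalIntegral.integral_hasDerivAt_right
      · exact hgi a x ⟨le_rfl, hab⟩ (Ioo_subset_Icc_self hx)
      · exact (hg.mono Ioo_subset_Icc_self).stronglyMeasurableAtFilter isOpen_Ioo x hx
      · exact (hg.mono Ioo_subset_Icc_self).continuousAt (isOpen_Ioo.mem_nhds hx)
    have hVd : HasDerivAt V (-(w x)) x := by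
      have heq : V =ᶠ[nhds x] (fun y => (∫ u in a..b, w u) - ∫ u in a..y, w u) := by
        filter_upwards [hmemIcc] with y hy
        have := intervalIntegral.integral_add_adjacent_intervals
          (hwi a y ⟨le_rfl, hab⟩ hy) (hwi y b hy ⟨hab, le_rfl⟩)
        simp only [hV]; linarith
      have hpd : HasDerivAt (fun y => ∫ u in a..y, w u) (w x) x := by
        apply intervalIntegral.integral_hasDerivAt_right
        · exact hwi a x ⟨le_rfl, hab⟩ (Ioo_subset_Icc_self hx)
        · exact hwc.stronglyMeasurableAtFilter isOpen_Ioo x hx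
        · exact hwc.continuousAt (isOpen_Ioo.mem_nhds hx)
      have hcd : HasDerivAt (fun y => (∫ u in a..b, w u) - ∫ u in a..y, w u) (-(w x)) x := by
        exact ((hasDerivAt_const x (∫ u in a..b, w u)).sub hpd).congr_deriv (by simp)
      exact hcd.congr_of_eventuallyEq heq
    have := hVd.mul hPd
    rw [show -w x * P x + V x * g x = V x * g x - w x * P x by ring] at this
    exact this
  have main : ∫ x in a..b, (V x * g x - w x * P x) = V b * P b - V a * P a := by
    apply intervalIntegral.integral_eq_sub_of_hasDeriv_right_of_le hab
      (hVc.mul hPc) (fun x hx => (key x hx).hasDerivWithinAt)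
    apply IntervalIntegrable.sub
    · exact ((hVc.mul hg).mono (by rw [huIcc])).intervalIntegrable
    · exact hw.mul_continuousOn (by rwa [huIcc])
  have hVb : V b = 0 := integral_same
  have hPa : P a = 0 := integral_same
  rw [hVb, hPa] at main
  simp only [mul_zero, zero_mul, sub_zero] at main
  have hint1 : IntervalIntegrable (fun t => V t * g t) volume a b :=
    ((hVc.mul hg).mono (by rw [huIcc])).intervalIntegrable
  have hint2 : IntervalIntegrable (fun t => w t * P t) volume a b :=
    hw.mul_continuousOn (by rwa [huIcc])
  have := intervalIntegral.integral_sub hint1 hint2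
  rw [main] at this
  linarith


lemma master {T α : ℝ} (hT : 0 < T) (hα : α < 1) (hα0 : α ≠ 0) {f g : ℝ → ℝ}
    (hf : ContinuousOn f (Icc 0 T)) (hg : ContinuousOn g (Icc 0 T)) :
    ((∫ t in (0:ℝ)..T, g t * ∫ s in (0:ℝ)..t, f s * (t - s) ^ (-α))
        = ∫ s in (0:ℝ)..T, f s * ∫ t in s..T, g t * (t - s) ^ (-α))
    ∧ IntervalIntegrable (fun t => g t * ∫ s in (0:ℝ)..t, f s * (t - s) ^ (-α)) volume 0 T
    ∧ IntervalIntegrable (fun s => f s * ∫ t in s..T, g t * (t - s) ^ (-α)) volume 0 T := by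
  set μ := volume.restrict (Ioc (0:ℝ) T) with hμ
  set F : ℝ × ℝ → ℝ := fun p => if p.2 < p.1 then f p.2 * g p.1 * (p.1 - p.2) ^ (-α) else 0
    with hFdef
  -- measurability
  have hFm : AEStronglyMeasurable F (μ.prod μ) := by
    have h1 : AEStronglyMeasurable f μ :=
      (hf.mono Ioc_subset_Icc_self).aestronglyMeasurable measurableSet_Ioc
    have h2 : AEStronglyMeasurable g μ :=
      (hg.mono Ioc_subset_Icc_self).aestronglyMeasurable measurableSet_Ioc
    have hker : AEStronglyMeasurable (fun p : ℝ × ℝ => (p.1 - p.2) ^ (-α)) (μ.prod μ) :=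
      ((measurable_fst.sub measurable_snd).pow measurable_const).aestronglyMeasurable
    have hH : AEStronglyMeasurable (fun p : ℝ × ℝ => f p.2 * g p.1 * (p.1 - p.2) ^ (-α))
        (μ.prod μ) := (h1.comp_snd.mul h2.comp_fst).mul hker
    have hFind : F = Set.indicator {p : ℝ × ℝ | p.2 < p.1}
        (fun p => f p.2 * g p.1 * (p.1 - p.2) ^ (-α)) := by
      ext p; rw [Set.indicator_apply]; rfl
    rw [hFind]
    exact hH.indicator (measurableSet_lt measurable_snd measurable_fst)
  -- bound
  obtain ⟨M1, hM1⟩ := isCompact_Icc.exists_bound_of_continuousOn hf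
  obtain ⟨M2, hM2⟩ := isCompact_Icc.exists_bound_of_continuousOn hg
  set M := max M1 (max M2 0) with hM
  have hMnn : (0:ℝ) ≤ M := le_trans (le_max_right M2 0) (le_max_right _ _)
  have hfM : ∀ x ∈ Icc (0:ℝ) T, |f x| ≤ M := fun x hx =>
    le_trans (hM1 x hx) (le_max_left _ _)
  have hgM : ∀ x ∈ Icc (0:ℝ) T, |g x| ≤ M := fun x hx =>
    le_trans (hM2 x hx) (le_trans (le_max_left M2 0) (le_max_right _ _))
  -- slice identifications
  have slice_t_eq : ∀ t ∈ Ioc (0:ℝ) T, ∀ s ∈ Ioc (0:ℝ) T,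
      F (t, s) = (Ioc 0 t).indicator (fun s => f s * g t * (t - s) ^ (-α)) s := by
    intro t _ht s hs
    by_cases h : s < t
    · rw [hFdef]; simp only
      rw [if_pos h]
      have e : (Ioc (0:ℝ) t).indicator (fun s => f s * g t * (t - s) ^ (-α)) s
          = f s * g t * (t - s) ^ (-α) := Set.indicator_of_mem (Set.mem_Ioc.mpr ⟨hs.1, h.le⟩) _
      exact e.symm
    · by_cases h2 : s ∈ Ioc (0:ℝ) t
      · have hst : s = t := le_antisymm h2.2 (not_lt.1 h)
        have e := Set.indicator_of_mem h2 (fun s => f s * g t * (t - s) ^ (-α))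
        rw [hFdef]; simp only
        rw [if_neg h, e, hst, sub_self, Real.zero_rpow (neg_ne_zero.2 hα0), mul_zero]
      · have e := Set.indicator_of_notMem h2 (fun s => f s * g t * (t - s) ^ (-α))
        rw [hFdef]; simp only
        rw [if_neg h, e]
  have slice_s_eq : ∀ s ∈ Ioc (0:ℝ) T, ∀ t ∈ Ioc (0:ℝ) T,
      F (t, s) = (Ioc s T).indicator (fun t => f s * g t * (t - s) ^ (-α)) t := by
    intro s _hs t ht
    by_cases h : s < t
    · rw [hFdef]; simp only
      rw [if_pos h]
      have e : (Ioc s T).indicator (fun t => f s * g t * (t - s) ^ (-α)) t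
          = f s * g t * (t - s) ^ (-α) := Set.indicator_of_mem (Set.mem_Ioc.mpr ⟨h, ht.2⟩) _
      exact e.symm
    · have e := Set.indicator_of_notMem (fun h2 => h h2.1 : t ∉ Ioc s T)
        (fun t => f s * g t * (t - s) ^ (-α))
      rw [hFdef]; simp only
      rw [if_neg h, e]
  have int_v_t : ∀ t ∈ Ioc (0:ℝ) T,
      IntervalIntegrable (fun s => f s * g t * (t - s) ^ (-α)) volume 0 t := by
    intro t ht
    apply (ker_intble2 hα t 0 t).continuousOn_mul
    rw [uIcc_of_le ht.1.le]
    exact (hf.mono (Icc_subset_Icc le_rfl ht.2)).mul continuousOn_const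
  have int_v_s : ∀ s ∈ Ioc (0:ℝ) T,
      IntervalIntegrable (fun t => f s * g t * (t - s) ^ (-α)) volume s T := by
    intro s hs
    apply (ker_intble1 hα s s T).continuousOn_mul
    rw [uIcc_of_le hs.2]
    exact continuousOn_const.mul (hg.mono (Icc_subset_Icc hs.1.le le_rfl))
  have int_slice_t : ∀ t ∈ Ioc (0:ℝ) T, Integrable (fun s => F (t, s)) μ := by
    intro t ht
    have hae : (Ioc (0:ℝ) t).indicator (fun s => f s * g t * (t - s) ^ (-α))
        =ᵐ[μ] (fun s => F (t, s)) := by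
      filter_upwards [ae_restrict_mem measurableSet_Ioc] with s hs
      exact (slice_t_eq t ht s hs).symm
    apply Integrable.congr _ hae
    rw [integrable_indicator_iff measurableSet_Ioc]
    rw [IntegrableOn, hμ, Measure.restrict_restrict measurableSet_Ioc,
      Set.inter_eq_self_of_subset_left (Set.Ioc_subset_Ioc le_rfl ht.2)]
    exact (intervalIntegrable_iff_integrableOn_Ioc_of_le ht.1.le).1 (int_v_t t ht)
  have slice_t_val : ∀ t ∈ Ioc (0:ℝ) T,
      ∫ s, F (t, s) ∂μ = g t * ∫ s in (0:ℝ)..t, f s * (t - s) ^ (-α) := by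
    intro t ht
    have h1 : ∫ s, F (t, s) ∂μ
        = ∫ s in Ioc (0:ℝ) T, (Ioc 0 t).indicator (fun s => f s * g t * (t - s) ^ (-α)) s := by
      exact setIntegral_congr_fun measurableSet_Ioc (fun s hs => slice_t_eq t ht s hs)
    rw [h1, setIntegral_indicator measurableSet_Ioc, Set.Ioc_inter_Ioc, sup_idem,
      (inf_eq_right.2 ht.2 : T ⊓ t = t), ← intervalIntegral.integral_of_le ht.1.le,
      show (fun s => f s * g t * (t - s) ^ (-α)) = fun s => g t * (f s * (t - s) ^ (-α))
        from funext fun s => by ring,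
      intervalIntegral.integral_const_mul]
  have slice_s_val : ∀ s ∈ Ioc (0:ℝ) T,
      ∫ t, F (t, s) ∂μ = f s * ∫ t in s..T, g t * (t - s) ^ (-α) := by
    intro s hs
    have h1 : ∫ t, F (t, s) ∂μ
        = ∫ t in Ioc (0:ℝ) T, (Ioc s T).indicator (fun t => f s * g t * (t - s) ^ (-α)) t := by
      exact setIntegral_congr_fun measurableSet_Ioc (fun t ht => slice_s_eq s hs t ht)
    rw [h1, setIntegral_indicator measurableSet_Ioc, Set.Ioc_inter_Ioc,
      (sup_eq_right.2 hs.1.le : (0:ℝ) ⊔ s = s), inf_idem,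
      ← intervalIntegral.integral_of_le hs.2,
      show (fun t => f s * g t * (t - s) ^ (-α)) = fun t => f s * (g t * (t - s) ^ (-α))
        from funext fun t => by ring,
      intervalIntegral.integral_const_mul]
  -- integrability on product
  have hFint : Integrable F (μ.prod μ) := by
    rw [integrable_prod_iff hFm]
    constructor
    · filter_upwards [ae_restrict_mem measurableSet_Ioc] with t ht
      exact int_slice_t t ht
    · apply Integrable.mono' (integrable_const (M * M * (T ^ (1 - α) / (1 - α))))
        (hFm.norm.integral_prod_right')
      filter_upwards [ae_restrict_mem measurableSet_Ioc] with t ht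
      have hnn : 0 ≤ ∫ s, ‖F (t, s)‖ ∂μ := integral_nonneg fun s => norm_nonneg _
      rw [Real.norm_eq_abs, abs_of_nonneg hnn]
      have hbint : Integrable ((Ioc (0:ℝ) t).indicator (fun s => M * M * (t - s) ^ (-α))) μ := by
        rw [integrable_indicator_iff measurableSet_Ioc]
        rw [IntegrableOn, hμ, Measure.restrict_restrict measurableSet_Ioc,
          Set.inter_eq_self_of_subset_left (Set.Ioc_subset_Ioc le_rfl ht.2)]
        exact (intervalIntegrable_iff_integrableOn_Ioc_of_le ht.1.le).1
          ((ker_intble2 hα t 0 t).const_mul (M * M))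
      have hb1 : ∫ s, ‖F (t, s)‖ ∂μ
          ≤ ∫ s, (Ioc (0:ℝ) t).indicator (fun s => M * M * (t - s) ^ (-α)) s ∂μ := by
        apply integral_mono_of_nonneg (Filter.Eventually.of_forall fun s => norm_nonneg _) hbint
        filter_upwards [ae_restrict_mem measurableSet_Ioc] with s hs
        by_cases h : s < t
        · have h0 : F (t, s) = f s * g t * (t - s) ^ (-α) := by rw [hFdef]; simp only; rw [if_pos h]
          have hker_nn : (0:ℝ) ≤ (t - s) ^ (-α) := Real.rpow_nonneg (by linarith) _
          have e : (Ioc (0:ℝ) t).indicator (fun s => M * M * (t - s) ^ (-α)) s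
              = M * M * (t - s) ^ (-α) := Set.indicator_of_mem (Set.mem_Ioc.mpr ⟨hs.1, h.le⟩) _
          rw [h0, e, Real.norm_eq_abs, abs_mul, abs_mul, abs_of_nonneg hker_nn]
          apply mul_le_mul_of_nonneg_right _ hker_nn
          exact mul_le_mul (hfM s ⟨hs.1.le, hs.2⟩) (hgM t ⟨ht.1.le, ht.2⟩) (abs_nonneg _) hMnn
        · have h0 : F (t, s) = 0 := by rw [hFdef]; simp only; rw [if_neg h]
          rw [h0, norm_zero]
          apply Set.indicator_nonneg
          intro x hx
          exact mul_nonneg (mul_nonneg hMnn hMnn) (Real.rpow_nonneg (by linarith [hx.2]) _)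
      have hb2 : ∫ s, (Ioc (0:ℝ) t).indicator (fun s => M * M * (t - s) ^ (-α)) s ∂μ
          = M * M * (t ^ (1 - α) / (1 - α)) := by
        rw [hμ, setIntegral_indicator measurableSet_Ioc, Set.Ioc_inter_Ioc, sup_idem,
          (inf_eq_right.2 ht.2 : T ⊓ t = t), ← intervalIntegral.integral_of_le ht.1.le,
          intervalIntegral.integral_const_mul, ker_eval2 hα ht.1.le, sub_zero]
      refine le_trans hb1 ?_
      rw [hb2]
      have h1α : (0:ℝ) < 1 - α := by linarith
      have hrp : t ^ (1 - α) ≤ T ^ (1 - α) := Real.rpow_le_rpow ht.1.le ht.2 h1α.le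
      have hdiv : t ^ (1 - α) / (1 - α) ≤ T ^ (1 - α) / (1 - α) := by gcongr
      exact mul_le_mul_of_nonneg_left hdiv (mul_nonneg hMnn hMnn)
  -- the three conclusions
  have hswap := MeasureTheory.integral_integral_swap
    (f := fun t s => F (t, s)) (μ := μ) (ν := μ) hFint
  refine ⟨?_, ?_, ?_⟩
  · rw [intervalIntegral.integral_of_le hT.le, intervalIntegral.integral_of_le hT.le]
    calc ∫ t in Ioc (0:ℝ) T, (g t * ∫ s in (0:ℝ)..t, f s * (t - s) ^ (-α))
        = ∫ t in Ioc (0:ℝ) T, (∫ s, F (t, s) ∂μ) :=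
          (setIntegral_congr_fun measurableSet_Ioc (fun t ht => (slice_t_val t ht).symm))
      _ = ∫ s in Ioc (0:ℝ) T, (∫ t, F (t, s) ∂μ) := hswap
      _ = ∫ s in Ioc (0:ℝ) T, (f s * ∫ t in s..T, g t * (t - s) ^ (-α)) :=
          (setIntegral_congr_fun measurableSet_Ioc (fun s hs => slice_s_val s hs))
  · rw [intervalIntegrable_iff_integrableOn_Ioc_of_le hT.le]
    apply (hFint.integral_prod_left).congr
    filter_upwards [ae_restrict_mem measurableSet_Ioc] with t ht
    exact slice_t_val t ht
  · rw [intervalIntegrable_iff_integrableOn_Ioc_of_le hT.le]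
    apply (hFint.integral_prod_right).congr
    filter_upwards [ae_restrict_mem measurableSet_Ioc] with s hs
    exact slice_s_val s hs


end FracIBP

open FracIBP

/-- Continuous fractional integration by parts with forward/backward Caputo
derivatives and Riemann-Liouville integrals. -/
theorem fractional_integration_by_parts (α T : ℝ) (hα : α ∈ Set.Ioo (0 : ℝ) 1)
    (hT : 0 < T) (φ φ' κ κ' : ℝ → ℝ)
    (hφ : ∀ t ∈ Set.Icc (0 : ℝ) T, HasDerivWithinAt φ (φ' t) (Set.Icc (0 : ℝ) T) t)
    (hφ' : ContinuousOn φ' (Set.Icc (0 : ℝ) T))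
    (hκ : ∀ t ∈ Set.Icc (0 : ℝ) T, HasDerivWithinAt κ (κ' t) (Set.Icc (0 : ℝ) T) t)
    (hκ' : ContinuousOn κ' (Set.Icc (0 : ℝ) T)) :
    (∫ t in (0 : ℝ)..T,
        ((Real.Gamma (1 - α))⁻¹ * ∫ s in (0 : ℝ)..t, φ' s / (t - s) ^ α) * κ t)
      + φ 0 * ((Real.Gamma (1 - α))⁻¹ * ∫ s in (0 : ℝ)..T, κ s / s ^ α)
    = (∫ t in (0 : ℝ)..T,
        φ t * (-(Real.Gamma (1 - α))⁻¹ * ∫ s in t..T, κ' s / (s - t) ^ α))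
      + κ T * ((Real.Gamma (1 - α))⁻¹ * ∫ s in (0 : ℝ)..T, φ s / (T - s) ^ α) := by
  obtain ⟨hα0, hα1⟩ := hα
  have hαlt : α < 1 := hα1
  have hαne : α ≠ 0 := ne_of_gt hα0
  have hβ : (0:ℝ) < 1 - α := by linarith
  have hβ0 : (1:ℝ) - α ≠ 0 := ne_of_gt hβ
  have hrm1 : (-1:ℝ) < -α := by linarith
  have hφc : ContinuousOn φ (Icc 0 T) := fun x hx => (hφ x hx).continuousWithinAt
  have hκc : ContinuousOn κ (Icc 0 T) := fun x hx => (hκ x hx).continuousWithinAt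
  have hφ'int : IntervalIntegrable φ' volume 0 T :=
    (show ContinuousOn φ' (uIcc 0 T) by rw [uIcc_of_le hT.le]; exact hφ').intervalIntegrable
  have hκ'int : IntervalIntegrable κ' volume 0 T :=
    (show ContinuousOn κ' (uIcc 0 T) by rw [uIcc_of_le hT.le]; exact hκ').intervalIntegrable
  -- continuity of primitives
  have hGc : ContinuousOn (fun t => ∫ u in t..T, κ' u) (Icc 0 T) := by
    have hio : IntegrableOn κ' (uIcc 0 T) volume := by
      rw [uIcc_of_le hT.le]
      exact (intervalIntegrable_iff_integrableOn_Icc_of_le hT.le).1 hκ'int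
    have := continuousOn_primitive_interval_left hio
    rwa [uIcc_of_le hT.le] at this
  have hΨc : ContinuousOn (fun x => ∫ u in (0:ℝ)..x, φ' u) (Icc 0 T) := by
    have hio : IntegrableOn φ' (uIcc 0 T) volume := by
      rw [uIcc_of_le hT.le]
      exact (intervalIntegrable_iff_integrableOn_Icc_of_le hT.le).1 hφ'int
    have := continuousOn_primitive_interval hio
    rwa [uIcc_of_le hT.le] at this
  -- FTC identities
  have hκeq : ∀ t ∈ Icc (0:ℝ) T, κ t = κ T - ∫ u in t..T, κ' u := by
    intro t ht
    rw [ftc hκ hκ' ht.1 ht.2 le_rfl]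
    ring
  have hφeq : ∀ t ∈ Icc (0:ℝ) T, φ t = φ 0 + ∫ u in (0:ℝ)..t, φ' u := by
    intro t ht
    rw [ftc hφ hφ' le_rfl ht.1 ht.2]
    ring
  -- division-to-rpow conversions
  have conv1 : ∀ t ∈ Icc (0:ℝ) T, (∫ s in (0:ℝ)..t, φ' s / (t - s) ^ α)
      = ∫ s in (0:ℝ)..t, φ' s * (t - s) ^ (-α) := by
    intro t ht
    apply intervalIntegral.integral_congr
    intro s hs
    rw [uIcc_of_le ht.1] at hs
    show φ' s / (t - s) ^ α = φ' s * (t - s) ^ (-α)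
    rw [Real.rpow_neg (sub_nonneg.2 hs.2), div_eq_mul_inv]
  have conv3 : ∀ t ∈ Icc (0:ℝ) T, (∫ s in t..T, κ' s / (s - t) ^ α)
      = ∫ s in t..T, κ' s * (s - t) ^ (-α) := by
    intro t ht
    apply intervalIntegral.integral_congr
    intro s hs
    rw [uIcc_of_le ht.2] at hs
    show κ' s / (s - t) ^ α = κ' s * (s - t) ^ (-α)
    rw [Real.rpow_neg (sub_nonneg.2 hs.1), div_eq_mul_inv]
  -- master Fubini instances
  have Mconst := master hT hαlt hαne hφ'
    (continuousOn_const : ContinuousOn (fun _ => κ T) (Icc (0:ℝ) T))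
  have Mφ'G := master hT hαlt hαne hφ' hGc
  have Mconstφ0 := master hT hαlt hαne
    (continuousOn_const : ContinuousOn (fun _ => φ 0) (Icc (0:ℝ) T)) hκ'
  have MΨκ' := master hT hαlt hαne hΨc hκ'
  have Mβraw := (master hT (show α - 1 < 1 by linarith)
    (show α - 1 ≠ 0 by intro h; exact hβ0 (by linarith)) hφ' hκ').1
  rw [show -(α - 1) = 1 - α by ring] at Mβraw
  have Mβ1 : (∫ t in (0:ℝ)..T, κ' t * ∫ u in (0:ℝ)..t, φ' u * (t - u) ^ (1 - α))
      = ∫ s in (0:ℝ)..T, φ' s * ∫ t in s..T, κ' t * (t - s) ^ (1 - α) := Mβraw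
  -- ### C1
  have C1 : (∫ t in (0:ℝ)..T, (∫ s in (0:ℝ)..t, φ' s / (t - s) ^ α) * κ t)
      = (κ T * (∫ s in (0:ℝ)..T, φ' s * (T - s) ^ (1 - α))
          - ∫ s in (0:ℝ)..T, φ' s * ∫ u in s..T, κ' u * (u - s) ^ (1 - α)) / (1 - α) := by
    have e0 : (∫ t in (0:ℝ)..T, (∫ s in (0:ℝ)..t, φ' s / (t - s) ^ α) * κ t)
        = ∫ t in (0:ℝ)..T, (κ T * (∫ s in (0:ℝ)..t, φ' s * (t - s) ^ (-α))
            - (∫ u in t..T, κ' u) * (∫ s in (0:ℝ)..t, φ' s * (t - s) ^ (-α))) := by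
      apply intervalIntegral.integral_congr
      intro t ht
      rw [uIcc_of_le hT.le] at ht
      show (∫ s in (0:ℝ)..t, φ' s / (t - s) ^ α) * κ t
        = κ T * (∫ s in (0:ℝ)..t, φ' s * (t - s) ^ (-α))
          - (∫ u in t..T, κ' u) * (∫ s in (0:ℝ)..t, φ' s * (t - s) ^ (-α))
      rw [conv1 t ht, hκeq t ht]
      ring
    have iA : IntervalIntegrable
        (fun t => κ T * (∫ s in (0:ℝ)..t, φ' s * (t - s) ^ (-α))) volume 0 T := Mconst.2.1
    have iB : IntervalIntegrable
        (fun t => (∫ u in t..T, κ' u) * (∫ s in (0:ℝ)..t, φ' s * (t - s) ^ (-α)))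
        volume 0 T := Mφ'G.2.1
    rw [e0, intervalIntegral.integral_sub iA iB]
    -- first piece
    have m1 : (∫ t in (0:ℝ)..T, κ T * (∫ s in (0:ℝ)..t, φ' s * (t - s) ^ (-α)))
        = ∫ s in (0:ℝ)..T, φ' s * ∫ t in s..T, κ T * (t - s) ^ (-α) := Mconst.1
    have f1 : (∫ t in (0:ℝ)..T, κ T * (∫ s in (0:ℝ)..t, φ' s * (t - s) ^ (-α)))
        = κ T / (1 - α) * (∫ s in (0:ℝ)..T, φ' s * (T - s) ^ (1 - α)) := by
      rw [m1]
      have hin : ∀ s ∈ uIcc (0:ℝ) T, φ' s * (∫ t in s..T, κ T * (t - s) ^ (-α))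
          = κ T / (1 - α) * (φ' s * (T - s) ^ (1 - α)) := by
        intro s hs
        rw [uIcc_of_le hT.le] at hs
        rw [intervalIntegral.integral_const_mul, ker_eval1 hαlt hs.2]
        ring
      rw [intervalIntegral.integral_congr hin, intervalIntegral.integral_const_mul]
    -- second piece
    have m2 : (∫ t in (0:ℝ)..T, (∫ u in t..T, κ' u) * (∫ s in (0:ℝ)..t, φ' s * (t - s) ^ (-α)))
        = ∫ s in (0:ℝ)..T, φ' s * ∫ t in s..T, (∫ u in t..T, κ' u) * (t - s) ^ (-α) := Mφ'G.1
    have f2 : (∫ t in (0:ℝ)..T, (∫ u in t..T, κ' u) * (∫ s in (0:ℝ)..t, φ' s * (t - s) ^ (-α)))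
        = (1 / (1 - α)) * (∫ s in (0:ℝ)..T, φ' s * ∫ u in s..T, κ' u * (u - s) ^ (1 - α)) := by
      rw [m2]
      have hin : ∀ s ∈ uIcc (0:ℝ) T,
          φ' s * (∫ t in s..T, (∫ u in t..T, κ' u) * (t - s) ^ (-α))
          = (1 / (1 - α)) * (φ' s * ∫ u in s..T, κ' u * (u - s) ^ (1 - α)) := by
        intro s hs
        rw [uIcc_of_le hT.le] at hs
        have e1 : (∫ t in s..T, (∫ u in t..T, κ' u) * (t - s) ^ (-α))
            = ∫ t in s..T, (t - s) ^ (-α) * (∫ u in t..T, κ' u) :=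
          intervalIntegral.integral_congr fun x _ => mul_comm _ _
        have hsw := fubW1 hs.2 (ker_intble1 hαlt s s T)
          ((ker_cont1 s).mono (fun x hx => hx.1 : Ioo s T ⊆ Ioi s))
          (hκ'.mono (Icc_subset_Icc hs.1 le_rfl))
        have e2 : (∫ t in s..T, (∫ x in s..t, (x - s) ^ (-α)) * κ' t)
            = ∫ u in s..T, (1 / (1 - α)) * (κ' u * (u - s) ^ (1 - α)) := by
          apply intervalIntegral.integral_congr
          intro u hu
          rw [uIcc_of_le hs.2] at hu
          show (∫ x in s..u, (x - s) ^ (-α)) * κ' u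
            = (1 / (1 - α)) * (κ' u * (u - s) ^ (1 - α))
          rw [ker_eval1 hαlt hu.1]
          ring
        rw [e1, hsw, e2, intervalIntegral.integral_const_mul]
        ring
      rw [intervalIntegral.integral_congr hin, intervalIntegral.integral_const_mul]
    rw [f1, f2]
    ring
  -- ### C2
  have C2 : (∫ s in (0:ℝ)..T, κ s / s ^ α)
      = (κ T * T ^ (1 - α) - ∫ u in (0:ℝ)..T, κ' u * u ^ (1 - α)) / (1 - α) := by
    have e0 : (∫ s in (0:ℝ)..T, κ s / s ^ α)
        = ∫ s in (0:ℝ)..T, (κ T * s ^ (-α) - s ^ (-α) * (∫ u in s..T, κ' u)) := by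
      apply intervalIntegral.integral_congr
      intro s hs
      rw [uIcc_of_le hT.le] at hs
      show κ s / s ^ α = κ T * s ^ (-α) - s ^ (-α) * (∫ u in s..T, κ' u)
      rw [hκeq s hs, Real.rpow_neg hs.1, div_eq_mul_inv]
      ring
    have iA : IntervalIntegrable (fun s => κ T * s ^ (-α)) volume 0 T :=
      (intervalIntegrable_rpow' hrm1).const_mul (κ T)
    have iB : IntervalIntegrable (fun s => s ^ (-α) * (∫ u in s..T, κ' u)) volume 0 T :=
      (intervalIntegrable_rpow' hrm1).mul_continuousOn
        (by rw [uIcc_of_le hT.le]; exact hGc)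
    rw [e0, intervalIntegral.integral_sub iA iB]
    have k0 : (∫ x in (0:ℝ)..T, x ^ (-α)) = T ^ (1 - α) / (1 - α) := by
      simpa using ker_eval1 hαlt hT.le (s := (0:ℝ)) (t := T)
    have f1 : (∫ s in (0:ℝ)..T, κ T * s ^ (-α)) = κ T * (T ^ (1 - α) / (1 - α)) := by
      rw [intervalIntegral.integral_const_mul, k0]
    have f2 : (∫ s in (0:ℝ)..T, s ^ (-α) * (∫ u in s..T, κ' u))
        = (1 / (1 - α)) * (∫ u in (0:ℝ)..T, κ' u * u ^ (1 - α)) := by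
      have hsw := fubW1 hT.le (intervalIntegrable_rpow' hrm1 (a := (0:ℝ)) (b := T))
        (ker_cont0.mono (fun x hx => hx.1 : Ioo (0:ℝ) T ⊆ Ioi 0)) hκ'
      rw [hsw]
      have hin : ∀ t ∈ uIcc (0:ℝ) T, (∫ x in (0:ℝ)..t, x ^ (-α)) * κ' t
          = (1 / (1 - α)) * (κ' t * t ^ (1 - α)) := by
        intro t ht
        rw [uIcc_of_le hT.le] at ht
        have kk : (∫ x in (0:ℝ)..t, x ^ (-α)) = t ^ (1 - α) / (1 - α) := by
          simpa using ker_eval1 hαlt ht.1 (s := (0:ℝ)) (t := t)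
        rw [kk]
        ring
      rw [intervalIntegral.integral_congr hin, intervalIntegral.integral_const_mul]
    rw [f1, f2]
    ring
  -- ### C3
  have C3 : (∫ t in (0:ℝ)..T, φ t * (∫ s in t..T, κ' s / (s - t) ^ α))
      = (φ 0 * (∫ u in (0:ℝ)..T, κ' u * u ^ (1 - α))
          + ∫ s in (0:ℝ)..T, φ' s * ∫ u in s..T, κ' u * (u - s) ^ (1 - α)) / (1 - α) := by
    have e0 : (∫ t in (0:ℝ)..T, φ t * (∫ s in t..T, κ' s / (s - t) ^ α))
        = ∫ t in (0:ℝ)..T, (φ 0 * (∫ s in t..T, κ' s * (s - t) ^ (-α))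
            + (∫ u in (0:ℝ)..t, φ' u) * (∫ s in t..T, κ' s * (s - t) ^ (-α))) := by
      apply intervalIntegral.integral_congr
      intro t ht
      rw [uIcc_of_le hT.le] at ht
      show φ t * (∫ s in t..T, κ' s / (s - t) ^ α)
        = φ 0 * (∫ s in t..T, κ' s * (s - t) ^ (-α))
          + (∫ u in (0:ℝ)..t, φ' u) * (∫ s in t..T, κ' s * (s - t) ^ (-α))
      rw [conv3 t ht, hφeq t ht]
      ring
    have iA : IntervalIntegrable
        (fun t => φ 0 * (∫ s in t..T, κ' s * (s - t) ^ (-α))) volume 0 T := Mconstφ0.2.2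
    have iB : IntervalIntegrable
        (fun t => (∫ u in (0:ℝ)..t, φ' u) * (∫ s in t..T, κ' s * (s - t) ^ (-α)))
        volume 0 T := MΨκ'.2.2
    rw [e0, intervalIntegral.integral_add iA iB]
    -- first piece
    have m1 : (∫ t in (0:ℝ)..T, φ 0 * (∫ s in t..T, κ' s * (s - t) ^ (-α)))
        = ∫ t in (0:ℝ)..T, κ' t * ∫ s in (0:ℝ)..t, φ 0 * (t - s) ^ (-α) :=
      (Mconstφ0.1).symm
    have f1 : (∫ t in (0:ℝ)..T, φ 0 * (∫ s in t..T, κ' s * (s - t) ^ (-α)))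
        = φ 0 / (1 - α) * (∫ u in (0:ℝ)..T, κ' u * u ^ (1 - α)) := by
      rw [m1]
      have hin : ∀ t ∈ uIcc (0:ℝ) T, κ' t * (∫ s in (0:ℝ)..t, φ 0 * (t - s) ^ (-α))
          = φ 0 / (1 - α) * (κ' t * t ^ (1 - α)) := by
        intro t ht
        rw [uIcc_of_le hT.le] at ht
        have kk : (∫ s in (0:ℝ)..t, (t - s) ^ (-α)) = t ^ (1 - α) / (1 - α) := by
          simpa using ker_eval2 hαlt ht.1 (s := (0:ℝ)) (t := t)
        rw [intervalIntegral.integral_const_mul, kk]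
        ring
      rw [intervalIntegral.integral_congr hin, intervalIntegral.integral_const_mul]
    -- second piece
    have m2 : (∫ t in (0:ℝ)..T,
          (∫ u in (0:ℝ)..t, φ' u) * (∫ s in t..T, κ' s * (s - t) ^ (-α)))
        = ∫ t in (0:ℝ)..T, κ' t * ∫ s in (0:ℝ)..t, (∫ u in (0:ℝ)..s, φ' u) * (t - s) ^ (-α) :=
      (MΨκ'.1).symm
    have f2 : (∫ t in (0:ℝ)..T,
          (∫ u in (0:ℝ)..t, φ' u) * (∫ s in t..T, κ' s * (s - t) ^ (-α)))
        = (1 / (1 - α)) * (∫ s in (0:ℝ)..T, φ' s * ∫ u in s..T, κ' u * (u - s) ^ (1 - α)) := by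
      rw [m2]
      have hin : ∀ t ∈ uIcc (0:ℝ) T,
          κ' t * (∫ s in (0:ℝ)..t, (∫ u in (0:ℝ)..s, φ' u) * (t - s) ^ (-α))
          = (1 / (1 - α)) * (κ' t * ∫ u in (0:ℝ)..t, φ' u * (t - u) ^ (1 - α)) := by
        intro t ht
        rw [uIcc_of_le hT.le] at ht
        have e1 : (∫ s in (0:ℝ)..t, (∫ u in (0:ℝ)..s, φ' u) * (t - s) ^ (-α))
            = ∫ s in (0:ℝ)..t, (t - s) ^ (-α) * (∫ u in (0:ℝ)..s, φ' u) :=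
          intervalIntegral.integral_congr fun x _ => mul_comm _ _
        have hsw := fubW2 ht.1 (ker_intble2 hαlt t 0 t)
          ((ker_cont2 t).mono (fun x hx => hx.2 : Ioo (0:ℝ) t ⊆ Iio t))
          (hφ'.mono (Icc_subset_Icc le_rfl ht.2))
        have e2 : (∫ s in (0:ℝ)..t, (∫ x in s..t, (t - x) ^ (-α)) * φ' s)
            = ∫ u in (0:ℝ)..t, (1 / (1 - α)) * (φ' u * (t - u) ^ (1 - α)) := by
          apply intervalIntegral.integral_congr
          intro u hu
          rw [uIcc_of_le ht.1] at hu
          show (∫ x in u..t, (t - x) ^ (-α)) * φ' u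
            = (1 / (1 - α)) * (φ' u * (t - u) ^ (1 - α))
          rw [ker_eval2 hαlt hu.2]
          ring
        rw [e1, hsw, e2, intervalIntegral.integral_const_mul]
        ring
      rw [intervalIntegral.integral_congr hin, intervalIntegral.integral_const_mul, Mβ1]
    rw [f1, f2]
    ring
  -- ### C4
  have C4 : (∫ s in (0:ℝ)..T, φ s / (T - s) ^ α)
      = (φ 0 * T ^ (1 - α) + ∫ s in (0:ℝ)..T, φ' s * (T - s) ^ (1 - α)) / (1 - α) := by
    have e0 : (∫ s in (0:ℝ)..T, φ s / (T - s) ^ α)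
        = ∫ s in (0:ℝ)..T, (φ 0 * (T - s) ^ (-α)
            + (T - s) ^ (-α) * (∫ u in (0:ℝ)..s, φ' u)) := by
      apply intervalIntegral.integral_congr
      intro s hs
      rw [uIcc_of_le hT.le] at hs
      show φ s / (T - s) ^ α
        = φ 0 * (T - s) ^ (-α) + (T - s) ^ (-α) * (∫ u in (0:ℝ)..s, φ' u)
      rw [hφeq s hs, Real.rpow_neg (sub_nonneg.2 hs.2), div_eq_mul_inv]
      ring
    have iA : IntervalIntegrable (fun s => φ 0 * (T - s) ^ (-α)) volume 0 T :=
      (ker_intble2 hαlt T 0 T).const_mul (φ 0)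
    have iB : IntervalIntegrable
        (fun s => (T - s) ^ (-α) * (∫ u in (0:ℝ)..s, φ' u)) volume 0 T :=
      (ker_intble2 hαlt T 0 T).mul_continuousOn (by rw [uIcc_of_le hT.le]; exact hΨc)
    rw [e0, intervalIntegral.integral_add iA iB]
    have f1 : (∫ s in (0:ℝ)..T, φ 0 * (T - s) ^ (-α)) = φ 0 * (T ^ (1 - α) / (1 - α)) := by
      have kk : (∫ s in (0:ℝ)..T, (T - s) ^ (-α)) = T ^ (1 - α) / (1 - α) := by
        simpa using ker_eval2 hαlt hT.le (s := (0:ℝ)) (t := T)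
      rw [intervalIntegral.integral_const_mul, kk]
    have f2 : (∫ s in (0:ℝ)..T, (T - s) ^ (-α) * (∫ u in (0:ℝ)..s, φ' u))
        = (1 / (1 - α)) * (∫ s in (0:ℝ)..T, φ' s * (T - s) ^ (1 - α)) := by
      have hsw := fubW2 hT.le (ker_intble2 hαlt T 0 T)
        ((ker_cont2 T).mono (fun x hx => hx.2 : Ioo (0:ℝ) T ⊆ Iio T)) hφ'
      rw [hsw]
      have hin : ∀ u ∈ uIcc (0:ℝ) T, (∫ x in u..T, (T - x) ^ (-α)) * φ' u
          = (1 / (1 - α)) * (φ' u * (T - u) ^ (1 - α)) := by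
        intro u hu
        rw [uIcc_of_le hT.le] at hu
        rw [ker_eval2 hαlt hu.2]
        ring
      rw [intervalIntegral.integral_congr hin, intervalIntegral.integral_const_mul]
    rw [f1, f2]
    ring
  -- ### assemble
  have g1 : (∫ t in (0:ℝ)..T,
        ((Real.Gamma (1 - α))⁻¹ * ∫ s in (0:ℝ)..t, φ' s / (t - s) ^ α) * κ t)
      = (Real.Gamma (1 - α))⁻¹
        * ∫ t in (0:ℝ)..T, (∫ s in (0:ℝ)..t, φ' s / (t - s) ^ α) * κ t := by
    rw [← intervalIntegral.integral_const_mul]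
    apply intervalIntegral.integral_congr
    intro t _
    ring
  have g3 : (∫ t in (0:ℝ)..T,
        φ t * (-(Real.Gamma (1 - α))⁻¹ * ∫ s in t..T, κ' s / (s - t) ^ α))
      = -(Real.Gamma (1 - α))⁻¹
        * ∫ t in (0:ℝ)..T, φ t * (∫ s in t..T, κ' s / (s - t) ^ α) := by
    rw [← intervalIntegral.integral_const_mul]
    apply intervalIntegral.integral_congr
    intro t _
    ring
  rw [g1, g3, C1, C2, C3, C4]
  field_simp
  ring
end
end

section
/- Nonexpansiveness of the stationary discrete HJB solution map in the sup norm: Let g be a numerical Hamiltonian, continuous in q and satisfying (G1) (nonincreasing in q₁ and q₃, nondecreasing in q₂ and q₄), and let ρ > 0. If grid functions U and W satisfy U_{i,j} − ρ(Δ_hU)_{i,j} + ρ·g(x_{i,j}, [D_hU]_{i,j}) = V_{i,j} and W_{i,j} − ρ(Δ_hW)_{i,j} + ρ·g(x_{i,j}, [D_hW]_{i,j}) = V′_{i,j} for all (i,j), for given grid functions V and V′, then ‖U − W‖_∞ ≤ ‖V − V′‖_∞. -/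
open Real Finset

noncomputable section

/-- forward L1 coefficients `c_k^n` -/
def cF (α : ℝ) (n k : ℕ) : ℝ :=
  if k = 0 then (n : ℝ) ^ (1 - α) - ((n : ℝ) - 1) ^ (1 - α)
  else 2 * ((n : ℝ) - k) ^ (1 - α) - ((n : ℝ) + 1 - k) ^ (1 - α) - ((n : ℝ) - 1 - k) ^ (1 - α)

/-- backward L1 coefficients `c̄_n^k` (with horizon `N`) -/
def cB (α : ℝ) (N n k : ℕ) : ℝ :=
  if k = N then ((N : ℝ) - n) ^ (1 - α) - ((N : ℝ) - 1 - n) ^ (1 - α)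
  else 2 * ((k : ℝ) - n) ^ (1 - α) - ((k : ℝ) + 1 - n) ^ (1 - α) - ((k : ℝ) - 1 - n) ^ (1 - α)

/-- `ρ_α = Γ(2-α) Δt^α` -/
def rhoA (α Δt : ℝ) : ℝ := Real.Gamma (2 - α) * Δt ^ α

/-- discrete forward Caputo derivative (L1 scheme) -/
def DF (α Δt : ℝ) (w : ℕ → ℝ) (n : ℕ) : ℝ :=
  (rhoA α Δt)⁻¹ * (w n - ∑ k ∈ Finset.range n, cF α n k * w k)

/-- discrete backward Caputo derivative (L1 scheme) -/
def DB (α Δt : ℝ) (N : ℕ) (w : ℕ → ℝ) (n : ℕ) : ℝ :=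
  (rhoA α Δt)⁻¹ * (w n - ∑ k ∈ Finset.Icc (n + 1) N, cB α N n k * w k)

/-- grid functions on the uniform periodic grid of the 2-torus -/
abbrev GridFun (Nh : ℕ) := ZMod Nh → ZMod Nh → ℝ

/-- mesh step `h = 1/N_h` -/
def hstep (Nh : ℕ) : ℝ := (Nh : ℝ)⁻¹

/-- grid point `x_{i,j} = (i h, j h)` -/
def gridPt (Nh : ℕ) (i j : ZMod Nh) : ℝ × ℝ :=
  ((i.val : ℝ) * hstep Nh, (j.val : ℝ) * hstep Nh)

/-- forward difference in the first variable -/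
def D1p (Nh : ℕ) (U : GridFun Nh) (i j : ZMod Nh) : ℝ := (U (i + 1) j - U i j) / hstep Nh

/-- forward difference in the second variable -/
def D2p (Nh : ℕ) (U : GridFun Nh) (i j : ZMod Nh) : ℝ := (U i (j + 1) - U i j) / hstep Nh

/-- the discrete gradient `[D_h U]_{i,j} ∈ ℝ⁴` -/
def Dh (Nh : ℕ) (U : GridFun Nh) (i j : ZMod Nh) : Fin 4 → ℝ :=
  ![D1p Nh U i j, D1p Nh U (i - 1) j, D2p Nh U i j, D2p Nh U i (j - 1)]

/-- five point discrete Laplacian -/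
def lapl (Nh : ℕ) (U : GridFun Nh) (i j : ZMod Nh) : ℝ :=
  -(4 * U i j - U (i + 1) j - U (i - 1) j - U i (j + 1) - U i (j - 1)) / (hstep Nh) ^ 2

/-- the scalar product `(U,V)₂ = h² Σ_{i,j} U_{i,j} V_{i,j}` -/
def inner2 (Nh : ℕ) [NeZero Nh] (U V : GridFun Nh) : ℝ :=
  (hstep Nh) ^ 2 * ∑ i : ZMod Nh, ∑ j : ZMod Nh, U i j * V i j

/-- the set `𝒦_h` of discrete probability measures -/
def Kh (Nh : ℕ) [NeZero Nh] : Set (GridFun Nh) :=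
  {M | (∀ i j, 0 ≤ M i j) ∧ inner2 Nh M (fun _ _ => 1) = 1}

/-- partial derivative `∂_{q_k} g(q)` -/
def gq (g : (Fin 4 → ℝ) → ℝ) (q : Fin 4 → ℝ) (k : Fin 4) : ℝ :=
  fderiv ℝ g q (Pi.single k 1)

/-- (G1): `g` nonincreasing in `q₁, q₃` and nondecreasing in `q₂, q₄` -/
def G1 (g : (Fin 4 → ℝ) → ℝ) : Prop :=
  (∀ q : Fin 4 → ℝ, Antitone fun s => g (Function.update q 0 s)) ∧
  (∀ q : Fin 4 → ℝ, Monotone fun s => g (Function.update q 1 s)) ∧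
  (∀ q : Fin 4 → ℝ, Antitone fun s => g (Function.update q 2 s)) ∧
  (∀ q : Fin 4 → ℝ, Monotone fun s => g (Function.update q 3 s))

/-- the discrete transport operator `𝓑_{i,j}(U,M)` -/
def Bop (Nh : ℕ) (g : ZMod Nh → ZMod Nh → (Fin 4 → ℝ) → ℝ) (U M : GridFun Nh)
    (i j : ZMod Nh) : ℝ :=
  (hstep Nh)⁻¹ *
    (M i j * gq (g i j) (Dh Nh U i j) 0 - M (i - 1) j * gq (g (i - 1) j) (Dh Nh U (i - 1) j) 0
     + M (i + 1) j * gq (g (i + 1) j) (Dh Nh U (i + 1) j) 1 - M i j * gq (g i j) (Dh Nh U i j) 1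
     + M i j * gq (g i j) (Dh Nh U i j) 2 - M i (j - 1) * gq (g i (j - 1)) (Dh Nh U i (j - 1)) 2
     + M i (j + 1) * gq (g i (j + 1)) (Dh Nh U i (j + 1)) 3 - M i j * gq (g i j) (Dh Nh U i j) 3)

instance (Nh : ℕ) : Nonempty (ZMod Nh) := ⟨0⟩

lemma g1_mono (f : (Fin 4 → ℝ) → ℝ) (hf : G1 f) (a b : Fin 4 → ℝ)
    (h0 : b 0 ≤ a 0) (h1 : a 1 ≤ b 1) (h2 : b 2 ≤ a 2) (h3 : a 3 ≤ b 3) :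
    f a ≤ f b := by
  obtain ⟨hf0, hf1, hf2, hf3⟩ := hf
  set c1 := Function.update a 0 (b 0) with hc1
  set c2 := Function.update c1 1 (b 1) with hc2
  set c3 := Function.update c2 2 (b 2) with hc3
  have e1 : f a ≤ f c1 := by
    have := hf0 a h0
    simpa using this
  have e2 : f c1 ≤ f c2 := by
    have h1' : c1 1 ≤ b 1 := by
      simpa [hc1, Function.update] using h1
    have := hf1 c1 h1'
    simpa using this
  have e3 : f c2 ≤ f c3 := by
    have h2' : b 2 ≤ c2 2 := by
      simpa [hc1, hc2, Function.update] using h2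
    have := hf2 c2 h2'
    simpa using this
  have e4 : f c3 ≤ f b := by
    have h3' : c3 3 ≤ b 3 := by
      simpa [hc1, hc2, hc3, Function.update] using h3
    have := hf3 c3 h3'
    have hb : Function.update c3 3 (b 3) = b := by
      funext k
      fin_cases k <;> simp [hc1, hc2, hc3, Function.update]
    simpa [hb] using this
  linarith

lemma hstep_pos (Nh : ℕ) [NeZero Nh] : 0 < hstep Nh := by
  have : (0 : ℝ) < (Nh : ℝ) := by
    exact_mod_cast Nat.pos_of_ne_zero (NeZero.ne Nh)
  simpa [hstep] using inv_pos.mpr this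

/-- one-sided comparison -/
lemma HJ_one_side (Nh : ℕ) [NeZero Nh]
    (g : ZMod Nh → ZMod Nh → (Fin 4 → ℝ) → ℝ)
    (hg1 : ∀ i j, G1 (g i j))
    (ρ : ℝ) (hρ : 0 < ρ) (U W V V' : GridFun Nh)
    (hU : ∀ i j, U i j - ρ * lapl Nh U i j + ρ * g i j (Dh Nh U i j) = V i j)
    (hW : ∀ i j, W i j - ρ * lapl Nh W i j + ρ * g i j (Dh Nh W i j) = V' i j) :
    ∀ p : ZMod Nh × ZMod Nh, U p.1 p.2 - W p.1 p.2 ≤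
      Finset.univ.sup' Finset.univ_nonempty
        fun p : ZMod Nh × ZMod Nh => |V p.1 p.2 - V' p.1 p.2| := by
  have hh := hstep_pos Nh
  obtain ⟨p₀, -, hmax⟩ := Finset.exists_max_image (Finset.univ : Finset (ZMod Nh × ZMod Nh))
    (fun p => U p.1 p.2 - W p.1 p.2) Finset.univ_nonempty
  obtain ⟨i, j⟩ := p₀
  have hmax' : ∀ i' j', U i' j' - W i' j' ≤ U i j - W i j := fun i' j' =>
    hmax (i', j') (Finset.mem_univ _)
  -- Laplacian comparison at the max point
  have hl : lapl Nh U i j - lapl Nh W i j ≤ 0 := by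
    have heq : lapl Nh U i j - lapl Nh W i j =
        ((U (i+1) j - W (i+1) j) + (U (i-1) j - W (i-1) j) + (U i (j+1) - W i (j+1))
          + (U i (j-1) - W i (j-1)) - 4 * (U i j - W i j)) / (hstep Nh) ^ 2 := by
      unfold lapl; ring
    rw [heq]
    apply div_nonpos_of_nonpos_of_nonneg
    · have := hmax' (i+1) j
      have := hmax' (i-1) j
      have := hmax' i (j+1)
      have := hmax' i (j-1)
      linarith
    · positivity
  -- Hamiltonian comparison at the max point
  have hg : g i j (Dh Nh W i j) ≤ g i j (Dh Nh U i j) := by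
    apply g1_mono (g i j) (hg1 i j)
    · -- (Dh U)₀ ≤ (Dh W)₀
      have := hmax' (i+1) j
      simp only [Dh, Matrix.cons_val_zero, D1p]
      apply div_le_div_of_nonneg_right ?_ hh.le
      linarith
    · -- (Dh W)₁ ≤ (Dh U)₁
      have h' := hmax' (i-1) j
      simp only [Dh, Matrix.cons_val_one, Matrix.head_cons, D1p, sub_add_cancel]
      apply div_le_div_of_nonneg_right ?_ hh.le
      linarith
    · -- (Dh U)₂ ≤ (Dh W)₂
      have := hmax' i (j+1)
      simp only [Dh, D2p]
      norm_num
      apply div_le_div_of_nonneg_right ?_ hh.le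
      linarith
    · -- (Dh W)₃ ≤ (Dh U)₃
      have h' := hmax' i (j-1)
      simp only [Dh, D2p, sub_add_cancel]
      norm_num
      apply div_le_div_of_nonneg_right ?_ hh.le
      linarith
  have key : U i j - W i j ≤ V i j - V' i j := by
    have e1 := hU i j
    have e2 := hW i j
    nlinarith [hρ.le]
  intro p
  calc U p.1 p.2 - W p.1 p.2 ≤ U i j - W i j := hmax' p.1 p.2
    _ ≤ V i j - V' i j := key
    _ ≤ |V i j - V' i j| := le_abs_self _
    _ ≤ _ := Finset.le_sup' (f := fun p : ZMod Nh × ZMod Nh => |V p.1 p.2 - V' p.1 p.2|)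
        (Finset.mem_univ (i, j))

/-- Nonexpansiveness in the sup norm of the stationary discrete HJB solution map. -/
theorem stationary_HJ_nonexpansive (Nh : ℕ) [NeZero Nh]
    (g : ZMod Nh → ZMod Nh → (Fin 4 → ℝ) → ℝ)
    (hgc : ∀ i j, Continuous (g i j)) (hg1 : ∀ i j, G1 (g i j))
    (ρ : ℝ) (hρ : 0 < ρ) (U W V V' : GridFun Nh)
    (hU : ∀ i j, U i j - ρ * lapl Nh U i j + ρ * g i j (Dh Nh U i j) = V i j)
    (hW : ∀ i j, W i j - ρ * lapl Nh W i j + ρ * g i j (Dh Nh W i j) = V' i j) :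
    (Finset.univ.sup' Finset.univ_nonempty
        fun p : ZMod Nh × ZMod Nh => |U p.1 p.2 - W p.1 p.2|)
      ≤ Finset.univ.sup' Finset.univ_nonempty
        fun p : ZMod Nh × ZMod Nh => |V p.1 p.2 - V' p.1 p.2| := by
  have h1 := HJ_one_side Nh g hg1 ρ hρ U W V V' hU hW
  have h2 := HJ_one_side Nh g hg1 ρ hρ W U V' V hW hU
  apply Finset.sup'_le
  intro p _
  rw [abs_sub_le_iff]
  constructor
  · exact h1 p
  · have := h2 p
    have hsame : (Finset.univ.sup' Finset.univ_nonempty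
          fun p : ZMod Nh × ZMod Nh => |V' p.1 p.2 - V p.1 p.2|)
        = Finset.univ.sup' Finset.univ_nonempty
          fun p : ZMod Nh × ZMod Nh => |V p.1 p.2 - V' p.1 p.2| := by
      apply Finset.sup'_congr _ rfl
      intro q _
      exact abs_sub_comm _ _
    linarith [this, hsame ▸ this]
end
end

section
/- Stability of the L1-scheme error recursion: Fix α ∈ (0,1) and set B_k := (k+1)^{1−α} − k^{1−α} for k ≥ 0 (so B₀ = 1 and (B_k) is decreasing). Let N ∈ ℕ⁺, C > 0, ρ > 0, let (eⁿ)_{n=0}^N be nonnegative reals with e⁰ = 0, and let (εⁿ)_{n=1}^N be nonnegative reals. Suppose that for every 0 ≤ n ≤ N−1: e^{n+1} ≤ (1 − B₁)eⁿ + Σ_{k=1}^{n−1}(B_k − B_{k+1})e^{n−k} + B_n e⁰ + Cρε^{n+1}. Then for every 1 ≤ n ≤ N: eⁿ ≤ Cρ·B_{n−1}^{−1}·max_{1≤k≤N} ε^k. -/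
open Real Finset

noncomputable section

/-- the L1 weights `B_k = (k+1)^{1-α} - k^{1-α}` -/
def Bcoef (α : ℝ) (k : ℕ) : ℝ := ((k : ℝ) + 1) ^ (1 - α) - (k : ℝ) ^ (1 - α)

lemma Bcoef_pos {α : ℝ} (hα : α ∈ Set.Ioo (0 : ℝ) 1) (k : ℕ) : 0 < Bcoef α k := by
  have h1 : (0:ℝ) < 1 - α := by linarith [hα.2]
  have : (k:ℝ) ^ (1-α) < ((k:ℝ)+1) ^ (1-α) :=
    Real.rpow_lt_rpow (Nat.cast_nonneg k) (by linarith) h1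
  simpa [Bcoef] using sub_pos.mpr this

lemma Bcoef_zero {α : ℝ} (hα : α ∈ Set.Ioo (0 : ℝ) 1) : Bcoef α 0 = 1 := by
  have h1 : (1:ℝ) - α ≠ 0 := by have := hα.2; intro h; linarith
  simp [Bcoef, Real.zero_rpow h1]

lemma Bcoef_succ_le {α : ℝ} (hα : α ∈ Set.Ioo (0 : ℝ) 1) (k : ℕ) :
    Bcoef α (k + 1) ≤ Bcoef α k := by
  have hcon : ConcaveOn ℝ (Set.Ici 0) fun x : ℝ ↦ x ^ (1 - α) :=
    Real.concaveOn_rpow (by linarith [hα.2]) (by linarith [hα.1])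
  have h := hcon.slope_anti_adjacent (x := (k:ℝ)) (y := (k:ℝ)+1) (z := (k:ℝ)+2)
    (by simp) (Set.mem_Ici.mpr (by positivity)) (by linarith) (by linarith)
  rw [show ((k:ℝ)+2-((k:ℝ)+1)) = 1 by ring, show ((k:ℝ)+1-(k:ℝ)) = 1 by ring,
    div_one, div_one] at h
  have hcast : ((k:ℝ)+1)+1 = (k:ℝ)+2 := by ring
  simp only [Bcoef, Nat.cast_add, Nat.cast_one, hcast]
  linarith

lemma Bcoef_anti {α : ℝ} (hα : α ∈ Set.Ioo (0 : ℝ) 1) : Antitone (Bcoef α) :=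
  antitone_nat_of_succ_le (Bcoef_succ_le hα)

lemma Bcoef_tele {α : ℝ} (n : ℕ) (hn : 1 ≤ n) :
    ∑ k ∈ Finset.Icc 1 (n - 1), (Bcoef α k - Bcoef α (k + 1))
      = Bcoef α 1 - Bcoef α n := by
  induction n with
  | zero => omega
  | succ m ih =>
    rcases Nat.eq_or_lt_of_le hn with h | h
    · simp [← h]
    · have hm : 1 ≤ m := by omega
      have : m + 1 - 1 = (m - 1) + 1 := by omega
      rw [this, Finset.sum_Icc_succ_top (by omega), ih hm]
      have : m - 1 + 1 = m := by omega
      rw [this]; ring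

/-- Stability of the L1-scheme error recursion. -/
theorem L1_error_recursion_stability (α : ℝ) (hα : α ∈ Set.Ioo (0 : ℝ) 1)
    (N : ℕ) (hN : 1 ≤ N) (C ρ : ℝ) (hC : 0 < C) (hρ : 0 < ρ)
    (e ε : ℕ → ℝ) (he : ∀ n ≤ N, 0 ≤ e n) (hε : ∀ n, 1 ≤ n → n ≤ N → 0 ≤ ε n)
    (he0 : e 0 = 0)
    (hrec : ∀ n < N, e (n + 1) ≤ (1 - Bcoef α 1) * e n
        + (∑ k ∈ Finset.Icc 1 (n - 1), (Bcoef α k - Bcoef α (k + 1)) * e (n - k))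
        + Bcoef α n * e 0 + C * ρ * ε (n + 1)) :
    ∀ n, 1 ≤ n → n ≤ N →
      e n ≤ C * ρ * (Bcoef α (n - 1))⁻¹ *
        (Finset.Icc 1 N).sup' (Finset.nonempty_Icc.mpr hN) ε := by
  set E := (Finset.Icc 1 N).sup' (Finset.nonempty_Icc.mpr hN) ε with hE
  have hE0 : 0 ≤ E := le_trans (hε 1 le_rfl hN)
    (Finset.le_sup' ε (by simp [Finset.mem_Icc, hN]))
  have hεE : ∀ k, 1 ≤ k → k ≤ N → ε k ≤ E := fun k h1 h2 =>
    Finset.le_sup' ε (Finset.mem_Icc.mpr ⟨h1, h2⟩)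
  intro n
  induction n using Nat.strong_induction_on with
  | _ n IH =>
  intro hn1 hnN
  obtain ⟨m, rfl⟩ : ∃ m, n = m + 1 := ⟨n - 1, by omega⟩
  have hmN : m < N := by omega
  have hBm : 0 < Bcoef α m := Bcoef_pos hα m
  have hrec' := hrec m hmN
  rw [he0] at hrec'
  rcases Nat.eq_zero_or_pos m with rfl | hm1
  · -- base case n = 1
    have h1 : e 1 ≤ C * ρ * ε 1 := by simpa [he0] using hrec'
    have h2 : C * ρ * ε 1 ≤ C * ρ * E :=
      mul_le_mul_of_nonneg_left (hεE 1 le_rfl hN) (by positivity)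
    simp only [Nat.add_sub_cancel, Bcoef_zero hα, inv_one]
    linarith
  · set K := C * ρ * (Bcoef α m)⁻¹ * E with hK
    have hK0 : 0 ≤ K := by positivity
    have key : ∀ j ≤ m, e j ≤ K := by
      intro j hj
      rcases Nat.eq_zero_or_pos j with rfl | hj1
      · rw [he0]; exact hK0
      · have h1 : e j ≤ C * ρ * (Bcoef α (j - 1))⁻¹ * E :=
          IH j (by omega) hj1 (by omega)
        have h2 : (Bcoef α (j - 1))⁻¹ ≤ (Bcoef α m)⁻¹ :=
          inv_anti₀ hBm (Bcoef_anti hα (by omega))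
        calc e j ≤ C * ρ * (Bcoef α (j - 1))⁻¹ * E := h1
          _ ≤ K := mul_le_mul_of_nonneg_right
              (mul_le_mul_of_nonneg_left h2 (by positivity)) hE0
    have hB1 : Bcoef α 1 ≤ 1 := by
      have := Bcoef_anti hα (Nat.zero_le 1)
      rwa [Bcoef_zero hα] at this
    have t1 : (1 - Bcoef α 1) * e m ≤ (1 - Bcoef α 1) * K :=
      mul_le_mul_of_nonneg_left (key m le_rfl) (by linarith)
    have t2 : (∑ k ∈ Finset.Icc 1 (m - 1), (Bcoef α k - Bcoef α (k + 1)) * e (m - k))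
        ≤ (Bcoef α 1 - Bcoef α m) * K := by
      calc (∑ k ∈ Finset.Icc 1 (m - 1), (Bcoef α k - Bcoef α (k + 1)) * e (m - k))
          ≤ ∑ k ∈ Finset.Icc 1 (m - 1), (Bcoef α k - Bcoef α (k + 1)) * K := by
            apply Finset.sum_le_sum
            intro k hk
            exact mul_le_mul_of_nonneg_left (key (m - k) (by omega))
              (by linarith [Bcoef_succ_le hα k])
        _ = (Bcoef α 1 - Bcoef α m) * K := by
            rw [← Finset.sum_mul, Bcoef_tele m hm1]
    have t4 : C * ρ * ε (m + 1) ≤ Bcoef α m * K := by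
      have h1 : C * ρ * ε (m + 1) ≤ C * ρ * E :=
        mul_le_mul_of_nonneg_left (hεE (m + 1) (by omega) (by omega))
          (by positivity)
      have heq : Bcoef α m * K = C * ρ * E := by
        rw [hK]; field_simp
      linarith
    have hfin : e (m + 1) ≤ K := by
      have hring : (1 - Bcoef α 1) * K + (Bcoef α 1 - Bcoef α m) * K
        + Bcoef α m * 0 + Bcoef α m * K = K := by ring
      linarith
    simpa [hK] using hfin
end
end
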